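/- Let K be an algebraically closed field of characteristic zero and let a, b, c be n×n matrices over K satisfying a+b+c = 0, a²+b²+c² = 0, a³+b³+c³ = 0, with additionally a²b = ba², 2a³ = a²b + bab, a²ba = a³b = -(1/2)a⁴, and a⁵ = 0. Then abab = (5/2)a⁴. -/
import Mathlib


theorem stmt2 {K : Type*} [Field K] [IsAlgClosed K] [CharZero K] {n : ℕ}
    (a b c : Matrix (Fin n) (Fin n) K)
    (h1 : a + b + c = 0)
    (h2 : a ^ 2 + b ^ 2 + c ^ 2 = 0)
    (h3 : a ^ 3 + b ^ 3 + c ^ 3 = 0)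
    (h4 : a ^ 2 * b = b * a ^ 2)
    (h5 : 2 • a ^ 3 = a ^ 2 * b + b * a * b)
    (h6 : a ^ 2 * b * a = a ^ 3 * b)
    (h7 : a ^ 3 * b = -((1 / 2 : K) • a ^ 4))
    (h8 : a ^ 5 = 0) :
    a * b * a * b = (5 / 2 : K) • a ^ 4 := by
  have key : a * (2 • a ^ 3) = a * (a ^ 2 * b + b * a * b) := by rw [h5]
  have key2 : 2 • a ^ 4 = a ^ 3 * b + a * b * a * b := by
    rw [mul_smul_comm, ← pow_succ'] at key
    rw [key]; noncomm_ring
  rw [h7] at key2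
  have : a * b * a * b = 2 • a ^ 4 + (1 / 2 : K) • a ^ 4 := by
    rw [key2]; abel
  rw [this]
  rw [← Nat.cast_smul_eq_nsmul K 2, ← add_smul]
  norm_num
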